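/- For every real number t > 1, log(t)/(t-1) - 1 - log(log(t)/(t-1)) ≤ (t-1)²/8. -/

import Mathlib

open Real Set

/-- Cubic Taylor upper bound: `log (1+x) ≤ x - x²/2 + x³/3` for `x ≥ 0`. -/
lemma log_le_cubic (x : ℝ) (hx : 0 ≤ x) :
    Real.log (1 + x) ≤ x - x ^ 2 / 2 + x ^ 3 / 3 := by
  have key : ∀ y ∈ Set.Ici (0:ℝ),
      HasDerivAt (fun y : ℝ => y - y ^ 2 / 2 + y ^ 3 / 3 - Real.log (1 + y))
        (1 - y + y ^ 2 - 1 / (1 + y)) y := by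
    intro y hy
    have hy0 : (0:ℝ) ≤ y := hy
    have h1 : (1:ℝ) + y ≠ 0 := by positivity
    have hlog : HasDerivAt (fun y : ℝ => Real.log (1 + y)) (1 / (1 + y)) y := by
      have := (Real.hasDerivAt_log h1).comp y ((hasDerivAt_id y).const_add 1)
      simpa [Function.comp_def] using this
    have hpoly : HasDerivAt (fun y : ℝ => y - y ^ 2 / 2 + y ^ 3 / 3)
        (1 - y + y ^ 2) y := by
      have := ((hasDerivAt_id y).sub (((hasDerivAt_pow 2 y)).div_const 2)).add
        (((hasDerivAt_pow 3 y)).div_const 3)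
      exact this.congr_deriv (by norm_num)
    exact hpoly.sub hlog
  have hmono : MonotoneOn (fun y : ℝ => y - y ^ 2 / 2 + y ^ 3 / 3 - Real.log (1 + y))
      (Set.Ici (0:ℝ)) := by
    apply monotoneOn_of_deriv_nonneg (convex_Ici 0)
    · apply ContinuousOn.sub (by fun_prop)
      apply ContinuousOn.log (by fun_prop)
      intro y hy; have : (0:ℝ) ≤ y := hy; positivity
    · intro y hy
      rw [interior_Ici] at hy
      exact ((key y (show (0:ℝ) ≤ y from le_of_lt hy)).differentiableAt).differentiableWithinAt
    · intro y hy
      rw [interior_Ici] at hy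
      have hy0 : (0:ℝ) < y := hy
      rw [((key y hy0.le).deriv)]
      have h1 : (0:ℝ) < 1 + y := by positivity
      rw [sub_nonneg, div_le_iff₀ h1]
      nlinarith [pow_nonneg hy0.le 3]
  have := hmono (Set.self_mem_Ici) (show x ∈ Set.Ici (0:ℝ) from hx) hx
  simp only [Real.log_one, add_zero] at this
  norm_num at this
  linarith

/-- Padé lower bound: `2(x-1)/(x+1) ≤ log x` for `x ≥ 1`. -/
lemma pade_le_log (x : ℝ) (hx : 1 ≤ x) :
    2 * (x - 1) / (x + 1) ≤ Real.log x := by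
  have key : ∀ y ∈ Set.Ici (1:ℝ),
      HasDerivAt (fun y : ℝ => Real.log y - (2 - 4 / (y + 1)))
        (1 / y - 4 / (y + 1) ^ 2) y := by
    intro y hy
    have hy0 : (0:ℝ) < y := lt_of_lt_of_le one_pos hy
    have h1 : y + 1 ≠ 0 := by positivity
    have hlog : HasDerivAt Real.log (1 / y) y := by
      simpa [one_div] using Real.hasDerivAt_log hy0.ne'
    have hinv : HasDerivAt (fun y : ℝ => 4 / (y + 1)) (-(4 / (y + 1) ^ 2)) y := by
      have hd : HasDerivAt (fun y : ℝ => y + 1) 1 y := (hasDerivAt_id y).add_const 1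
      have := (hasDerivAt_const y (4:ℝ)).div hd h1
      exact this.congr_deriv (by ring)
    have : HasDerivAt (fun y : ℝ => Real.log y - (2 - 4 / (y + 1)))
        (1 / y - (0 - -(4 / (y + 1) ^ 2))) y :=
      hlog.sub ((hasDerivAt_const y (2:ℝ)).sub hinv)
    convert this using 1
    ring
  have hmono : MonotoneOn (fun y : ℝ => Real.log y - (2 - 4 / (y + 1)))
      (Set.Ici (1:ℝ)) := by
    apply monotoneOn_of_deriv_nonneg (convex_Ici 1)
    · apply ContinuousOn.sub
      · apply ContinuousOn.log continuousOn_id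
        intro y hy; have : (1:ℝ) ≤ y := hy; positivity
      · apply ContinuousOn.sub continuousOn_const
        apply ContinuousOn.div continuousOn_const (by fun_prop)
        intro y hy; have : (1:ℝ) ≤ y := hy; positivity
    · intro y hy
      rw [interior_Ici] at hy
      exact ((key y (show (1:ℝ) ≤ y from le_of_lt hy)).differentiableAt).differentiableWithinAt
    · intro y hy
      rw [interior_Ici] at hy
      have hy1 : (1:ℝ) < y := hy
      rw [((key y hy1.le).deriv)]
      have hy0 : (0:ℝ) < y := lt_trans one_pos hy1
      have h1 : (0:ℝ) < (y + 1) ^ 2 := by positivity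
      rw [sub_nonneg, div_le_div_iff₀ h1 hy0]
      nlinarith [sq_nonneg (y - 1)]
  have := hmono (Set.self_mem_Ici) (show x ∈ Set.Ici (1:ℝ) from hx) hx
  simp only [Real.log_one] at this
  have hx1 : (0:ℝ) < x + 1 := by linarith
  have h2 : 2 * (x - 1) / (x + 1) = 2 - 4 / (x + 1) := by
    field_simp; ring
  rw [h2]
  norm_num at this
  linarith
/-- Key inequality in the proof of Theorem 5.1: for `t > 1`,
`log t/(t-1) - 1 - log(log t/(t-1)) ≤ (t-1)²/8`. -/
theorem secant_gap_upper_bound (t : ℝ) (ht : 1 < t) :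
    Real.log t / (t - 1) - 1 - Real.log (Real.log t / (t - 1)) ≤ (t - 1) ^ 2 / 8 := by
  have ht1 : (0:ℝ) < t - 1 := by linarith
  have ht0 : (0:ℝ) < t := by linarith
  have hlt : 0 < Real.log t := Real.log_pos ht
  set s : ℝ := Real.log t / (t - 1) with hs_def
  have hs0 : 0 < s := div_pos hlt ht1
  have hs1 : s ≤ 1 := by
    rw [hs_def, div_le_one ht1]
    exact Real.log_le_sub_one_of_pos ht0
  set s0 : ℝ := 2 / (t + 1) with hs0_def
  have ht2 : (0:ℝ) < t + 1 := by linarith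
  have hs0pos : 0 < s0 := by positivity
  have hss0 : s0 ≤ s := by
    rw [hs0_def, hs_def, div_le_div_iff₀ ht2 ht1]
    have := pade_le_log t ht.le
    rw [div_le_iff₀ ht2] at this
    linarith
  -- Step 1: monotonicity of u ↦ u - 1 - log u downwards on (0,1]
  have step1 : s - 1 - Real.log s ≤ s0 - 1 - Real.log s0 := by
    have h1 : Real.log (s0 / s) ≤ s0 / s - 1 :=
      Real.log_le_sub_one_of_pos (div_pos hs0pos hs0)
    rw [Real.log_div hs0pos.ne' hs0.ne'] at h1
    have h2 : s0 / s - 1 = (s0 - s) / s := by field_simp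
    rw [h2] at h1
    have h3 : (s0 - s) / s ≤ s0 - s := by
      rw [div_le_iff₀ hs0]
      nlinarith
    nlinarith
  -- Step 2: the bound at s0
  set x : ℝ := (t - 1) / 2 with hx_def
  have hx0 : 0 < x := by positivity
  have hxt : t + 1 = 2 * (1 + x) := by rw [hx_def]; ring
  have hlogs0 : Real.log s0 = -Real.log (1 + x) := by
    rw [hs0_def, hxt, Real.log_div two_ne_zero (by positivity),
      Real.log_mul two_ne_zero (by positivity)]
    ring
  have hs0val : s0 = 1 / (1 + x) := by
    rw [hs0_def, hxt]; field_simp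
  have hgoal : (t - 1) ^ 2 / 8 = x ^ 2 / 2 := by rw [hx_def]; ring
  have step2 : s0 - 1 - Real.log s0 ≤ x ^ 2 / 2 := by
    rw [hlogs0, hs0val]
    have h1x : (0:ℝ) < 1 + x := by positivity
    rcases le_or_gt x 2 with hc | hc
    · have hB := log_le_cubic x hx0.le
      have : x - x ^ 2 / 2 + x ^ 3 / 3 ≤ x ^ 2 / 2 + (1 - 1 / (1 + x)) := by
        have heq : 1 - 1 / (1 + x) = x / (1 + x) := by field_simp; ring
        rw [heq, ← sub_nonneg]
        have : x ^ 2 / 2 + x / (1 + x) - (x - x ^ 2 / 2 + x ^ 3 / 3) =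
            (x ^ 3 * (2 - x)) / (3 * (1 + x)) := by field_simp; ring
        rw [this]
        exact div_nonneg (mul_nonneg (by positivity) (by linarith)) (by positivity)
      linarith
    · have hB : Real.log (1 + x) ≤ x := by
        have := Real.log_le_sub_one_of_pos h1x
        linarith
      have : x ≤ x ^ 2 / 2 + (1 - 1 / (1 + x)) := by
        have heq : 1 - 1 / (1 + x) = x / (1 + x) := by field_simp; ring
        rw [heq, ← sub_nonneg]
        have heq2 : x ^ 2 / 2 + x / (1 + x) - x =
            (x ^ 2 * (x - 1)) / (2 * (1 + x)) := by field_simp; ring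
        rw [heq2]
        have : (0:ℝ) ≤ x - 1 := by linarith
        positivity
      linarith
  rw [hgoal]
  linarith
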